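/- For positive reals r, s, d, the function σ ↦ σ·Π₀(r,σ,d) is strictly monotone increasing on (0,∞), where Π₀(r,σ,d) = (∑_{l=0}^∞ r^l / ∏_{m=1}^{l} (σ + m·d))^{-1}. -/

import Mathlib

open scoped BigOperators

/-- Term of the normalizing series of the birth-death queue:
`r^l / ∏_{m=1}^{l} (s + m·d)`, empty product = 1. -/
noncomputable def qterm (r s d : ℝ) (l : ℕ) : ℝ :=
  r ^ l / ∏ m ∈ Finset.Icc 1 l, (s + (m : ℝ) * d)

/-- Stationary empty-queue probability `Π₀(r,s,d)`. -/
noncomputable def Pi0 (r s d : ℝ) : ℝ := (∑' l : ℕ, qterm r s d l)⁻¹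

lemma qprod_pos {s d : ℝ} (hs : 0 < s) (hd : 0 < d) (l : ℕ) :
    0 < ∏ m ∈ Finset.Icc 1 l, (s + (m : ℝ) * d) :=
  Finset.prod_pos fun m _ => by positivity

lemma qterm_pos {r s d : ℝ} (hr : 0 < r) (hs : 0 < s) (hd : 0 < d) (l : ℕ) :
    0 < qterm r s d l :=
  div_pos (pow_pos hr l) (qprod_pos hs hd l)

lemma qprod_ge {s d : ℝ} (hs : 0 < s) (hd : 0 < d) (l : ℕ) :
    d ^ l * (l.factorial : ℝ) ≤ ∏ m ∈ Finset.Icc 1 l, (s + (m : ℝ) * d) := by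
  have h1 : (∏ m ∈ Finset.Icc 1 l, ((m : ℝ) * d)) ≤
      ∏ m ∈ Finset.Icc 1 l, (s + (m : ℝ) * d) := by
    apply Finset.prod_le_prod
    · intro m hm; positivity
    · intro m hm; linarith [hs]
  have h2 : (∏ m ∈ Finset.Icc 1 l, ((m : ℝ) * d)) = d ^ l * (l.factorial : ℝ) := by
    rw [Finset.prod_mul_distrib, Finset.prod_const, Nat.card_Icc]
    have : (∏ m ∈ Finset.Icc 1 l, (m : ℝ)) = (l.factorial : ℝ) := by
      rw [← Nat.cast_prod, ← Finset.Ico_add_one_right_eq_Icc, Finset.prod_Ico_id_eq_factorial]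
    rw [this]
    simp [mul_comm]
  rw [← h2]; exact h1

lemma qterm_summable {r s d : ℝ} (hr : 0 < r) (hs : 0 < s) (hd : 0 < d) :
    Summable (qterm r s d) := by
  apply Summable.of_nonneg_of_le (fun l => (qterm_pos hr hs hd l).le)
    (fun l => ?_) (Real.summable_pow_div_factorial (r / d))
  have hP := qprod_pos hs hd l
  have hb : (0:ℝ) < d ^ l * (l.factorial : ℝ) := by positivity
  calc qterm r s d l ≤ r ^ l / (d ^ l * (l.factorial : ℝ)) :=
        div_le_div_of_nonneg_left (pow_pos hr l).le hb (qprod_ge hs hd l)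
    _ = (r / d) ^ l / (l.factorial : ℝ) := by rw [div_pow]; field_simp

theorem stmt7 (r d : ℝ) (hr : 0 < r) (hd : 0 < d) :
    StrictMonoOn (fun σ : ℝ => σ * Pi0 r σ d) (Set.Ioi 0) := by
  intro a ha b hb hab
  simp only [Set.mem_Ioi] at ha hb
  set f : ℝ → ℕ → ℝ := fun σ l => qterm r σ d l / σ with hf
  have hfs : ∀ σ : ℝ, 0 < σ → Summable (f σ) := fun σ hσ =>
    (qterm_summable hr hσ hd).div_const σ
  have hterm : ∀ l, f b l ≤ f a l := by
    intro l
    have hPa := qprod_pos ha hd l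
    have hPb := qprod_pos hb hd l
    have : f b l = r ^ l / (b * ∏ m ∈ Finset.Icc 1 l, (b + (m : ℝ) * d)) := by
      simp only [hf, qterm, div_div]; ring
    rw [this]
    have : f a l = r ^ l / (a * ∏ m ∈ Finset.Icc 1 l, (a + (m : ℝ) * d)) := by
      simp only [hf, qterm, div_div]; ring
    rw [this]
    apply div_le_div_of_nonneg_left (pow_pos hr l).le (by positivity)
    apply mul_le_mul hab.le ?_ hPa.le hb.le
    apply Finset.prod_le_prod (fun m _ => by positivity) (fun m _ => by linarith)
  have hstrict : f b 0 < f a 0 := by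
    simp [hf, qterm]
    exact inv_strictAnti₀ ha hab
  have hsumlt : ∑' l, f b l < ∑' l, f a l :=
    Summable.tsum_lt_tsum hterm hstrict (hfs b hb) (hfs a ha)
  have hpos : 0 < ∑' l, f b l := by
    have := Summable.tsum_pos (hfs b hb) (fun l => (div_pos (qterm_pos hr hb hd l) hb).le) 0
      (div_pos (qterm_pos hr hb hd 0) hb)
    exact this
  have key : ∀ σ : ℝ, 0 < σ → σ * Pi0 r σ d = (∑' l, f σ l)⁻¹ := by
    intro σ hσ
    rw [hf]
    simp only []
    rw [tsum_div_const, Pi0]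
    rw [div_eq_mul_inv, mul_inv, inv_inv]
    ring
  show a * Pi0 r a d < b * Pi0 r b d
  rw [key a ha, key b hb]
  exact inv_strictAnti₀ hpos hsumlt
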